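/- arXiv:1107.2429 — 2 statements merged into one kernel-verified Lean document; each statement's English description precedes it below -/
import Mathlib

section
/- Let (G,<) be an ordered group possessing a convex jump (N,H) which is not central, i.e., [H,G] ⊄ N. Then G contains a noncommutative free monoid; more precisely, there exist elements a, b ∈ G with 1 < a and 1 < b such that a and b generate a free monoid of rank 2 in G. (In the terminology of the paper: every ordered group of type 2 or type 3 contains a noncommutative free monoid generated by two positive elements.) -/
/-- Elements `a, b` of a monoid `G` generate a free monoid of rank 2 if the monoid
homomorphism from the free monoid on two generators to `G` sending the generators to
`a` and `b` is injective. -/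
def GeneratesFreeMonoid2 {G : Type*} [Monoid G] (a b : G) : Prop :=
  Function.Injective
    (FreeMonoid.lift (fun i : Fin 2 => if i = 0 then a else b) : FreeMonoid (Fin 2) →* G)

/-- A subgroup `C` of an ordered group is convex if whenever `x, z ∈ C`, `y ∈ G` and
`x ≤ y ≤ z`, then `y ∈ C`. -/
def Subgroup.IsConvex {G : Type*} [Group G] [Preorder G] (C : Subgroup G) : Prop :=
  ∀ x ∈ C, ∀ z ∈ C, ∀ y : G, x ≤ y → y ≤ z → y ∈ C

/-- A pair `(N, H)` of convex subgroups is a convex jump if `N ⊊ H` and no convex subgroup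
lies strictly between `N` and `H`. -/
def Subgroup.IsConvexJump {G : Type*} [Group G] [Preorder G] (N H : Subgroup G) : Prop :=
  N.IsConvex ∧ H.IsConvex ∧ N < H ∧ ∀ K : Subgroup G, K.IsConvex → ¬(N < K ∧ K < H)

set_option linter.unusedSectionVars false
set_option linter.unusedVariables false

namespace FMproof

variable {G : Type*} [Group G] [LinearOrder G]
  [CovariantClass G G (· * ·) (· < ·)]
  [CovariantClass G G (Function.swap (· * ·)) (· < ·)]

local instance : CovariantClass G G (· * ·) (· ≤ ·) :=
  ⟨fun a b c h => h.lt_or_eq.elim (fun h' => (mul_lt_mul_right h' a).le) (fun h' => by rw [h'])⟩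
local instance : CovariantClass G G (Function.swap (· * ·)) (· ≤ ·) :=
  ⟨fun a b c h => h.lt_or_eq.elim (fun h' => (mul_lt_mul_left h' a).le) (fun h' => by rw [h'])⟩

lemma cancel_left_le {a b c : G} (h : a * b ≤ a * c) : b ≤ c := by
  have := mul_le_mul_right h a⁻¹
  simpa [mul_assoc] using this

lemma cancel_left_lt {a b c : G} (h : a * b < a * c) : b < c := by
  have := mul_lt_mul_right h a⁻¹
  simpa [mul_assoc] using this

lemma one_le_conj {x : G} (g : G) (h : 1 ≤ x) : 1 ≤ g * x * g⁻¹ := by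
  have h1 : g * 1 ≤ g * x := mul_le_mul_right h g
  have h2 := mul_le_mul_left h1 g⁻¹
  simpa using h2

lemma one_lt_conj {x : G} (g : G) (h : 1 < x) : 1 < g * x * g⁻¹ := by
  have h1 : g * 1 < g * x := mul_lt_mul_right h g
  have h2 := mul_lt_mul_left h1 g⁻¹
  simpa using h2

lemma conj_le_conj {x y : G} (g : G) (h : x ≤ y) : g * x * g⁻¹ ≤ g * y * g⁻¹ :=
  mul_le_mul_left (mul_le_mul_right h g) g⁻¹

lemma conj_pow' (g x : G) (n : ℕ) : (g * x * g⁻¹) ^ n = g * x ^ n * g⁻¹ := by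
  induction n with
  | zero => simp
  | succ n ih => rw [pow_succ, ih, pow_succ]; group

lemma my_one_le_pow {x : G} (h : 1 ≤ x) (n : ℕ) : 1 ≤ x ^ n := by
  induction n with
  | zero => simp
  | succ n ih => rw [pow_succ]; exact one_le_mul ih h

lemma my_pow_le_pow_right {x : G} (h : 1 ≤ x) {m n : ℕ} (hmn : m ≤ n) : x ^ m ≤ x ^ n := by
  have e : x ^ n = x ^ m * x ^ (n - m) := by rw [← pow_add]; congr 1; omega
  rw [e]
  exact le_mul_of_one_le_right' (my_one_le_pow h _)

lemma my_le_self_pow {x : G} (h : 1 ≤ x) {n : ℕ} (hn : n ≠ 0) : x ≤ x ^ n := by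
  have := my_pow_le_pow_right h (show 1 ≤ n by omega)
  simpa using this

lemma my_pow_le_pow_left {x y : G} (h : x ≤ y) (n : ℕ) : x ^ n ≤ y ^ n := by
  induction n with
  | zero => simp
  | succ n ih => rw [pow_succ, pow_succ]; exact mul_le_mul' ih h

lemma my_zpow_le {β : G} (hβ : 1 ≤ β) {p q : ℤ} (h : p ≤ q) : β ^ p ≤ β ^ q := by
  have e : β ^ q = β ^ p * β ^ (q - p) := by rw [← zpow_add]; congr 1; omega
  have h2 : (1 : G) ≤ β ^ (q - p) := by
    have e2 : β ^ (q - p) = β ^ ((q - p).toNat : ℤ) := by congr 1; omega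
    rw [e2, zpow_natCast]
    exact my_one_le_pow hβ _
  rw [e]
  exact le_mul_of_one_le_right' h2

lemma one_lt_inv_of_lt' {z : G} (h : z < 1) : 1 < z⁻¹ := by
  have := mul_lt_mul_right h z⁻¹
  simpa using this

lemma lt_of_one_lt_inv_mul {x y : G} (h : 1 < x⁻¹ * y) : x < y := by
  have := mul_lt_mul_right h x
  simpa [mul_assoc] using this

/-- conjugated subgroup `g C g⁻¹`, via membership `g⁻¹ x g ∈ C`. -/
def cj (g : G) (C : Subgroup G) : Subgroup G where
  carrier := {x | g⁻¹ * x * g ∈ C}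
  one_mem' := by simpa using C.one_mem
  mul_mem' := by
    intro x y hx hy
    have h := C.mul_mem hx hy
    have e : (g⁻¹ * x * g) * (g⁻¹ * y * g) = g⁻¹ * (x * y) * g := by group
    rw [e] at h
    exact h
  inv_mem' := by
    intro x hx
    have h := C.inv_mem hx
    have e : (g⁻¹ * x * g)⁻¹ = g⁻¹ * x⁻¹ * g := by group
    rw [e] at h
    exact h

lemma mem_cj {g x : G} {C : Subgroup G} : x ∈ cj g C ↔ g⁻¹ * x * g ∈ C := Iff.rfl

lemma cj_one (C : Subgroup G) : cj (1 : G) C = C := by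
  ext x; simp [mem_cj]

lemma cj_cj (g g' : G) (C : Subgroup G) : cj g (cj g' C) = cj (g * g') C := by
  ext x
  have e : (g * g')⁻¹ * x * (g * g') = g'⁻¹ * (g⁻¹ * x * g) * g' := by group
  rw [mem_cj, mem_cj, mem_cj, e]

lemma cj_mono {g : G} {C D : Subgroup G} (h : C ≤ D) : cj g C ≤ cj g D :=
  fun _ hx => h hx

lemma cj_inv_cj (g : G) (C : Subgroup G) : cj g⁻¹ (cj g C) = C := by
  rw [cj_cj, inv_mul_cancel, cj_one]

lemma cj_lt_cj (g : G) {C D : Subgroup G} (h : C < D) : cj g C < cj g D := by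
  refine lt_of_le_of_ne (cj_mono h.le) (fun he => h.ne ?_)
  have := congrArg (cj g⁻¹) he
  rwa [cj_inv_cj, cj_inv_cj] at this

lemma cj_convex {g : G} {C : Subgroup G} (hC : C.IsConvex) : (cj g C).IsConvex := by
  intro x hx z hz y hxy hyz
  have h1 : g⁻¹ * x * g ≤ g⁻¹ * y * g := mul_le_mul_left (mul_le_mul_right hxy g⁻¹) g
  have h2 : g⁻¹ * y * g ≤ g⁻¹ * z * g := mul_le_mul_left (mul_le_mul_right hyz g⁻¹) g
  exact hC _ hx _ hz _ h1 h2

lemma cj_self {g : G} {C : Subgroup G} (hg : g ∈ C) : cj g C = C := by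
  ext x
  constructor
  · intro hx
    have := C.mul_mem (C.mul_mem hg hx) (C.inv_mem hg)
    have e : g * (g⁻¹ * x * g) * g⁻¹ = x := by group
    rwa [e] at this
  · intro hx
    exact C.mul_mem (C.mul_mem (C.inv_mem hg) hx) hg

lemma mem_fix {g : G} {C : Subgroup G} (hfix : cj g C = C) (x : G) :
    x ∈ C ↔ g * x * g⁻¹ ∈ C := by
  constructor
  · intro hx
    have h2 : g * x * g⁻¹ ∈ cj g C := by
      show g⁻¹ * (g * x * g⁻¹) * g ∈ C
      have e : g⁻¹ * (g * x * g⁻¹) * g = x := by group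
      rwa [e]
    rwa [hfix] at h2
  · intro hx
    rw [← hfix] at hx
    have hx' : g⁻¹ * (g * x * g⁻¹) * g ∈ C := hx
    have e : g⁻¹ * (g * x * g⁻¹) * g = x := by group
    rwa [e] at hx'

lemma fix_inv {g : G} {C : Subgroup G} (h : cj g C = C) : cj g⁻¹ C = C := by
  conv_lhs => rw [← h]
  rw [cj_inv_cj]

lemma cj_pow_fix {g : G} {C : Subgroup G} (h : cj g C = C) : ∀ i : ℕ, cj (g ^ i) C = C := by
  intro i
  induction i with
  | zero => rw [pow_zero, cj_one]
  | succ i ih => rw [pow_succ, ← cj_cj, h, ih]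

lemma conv_lt {C : Subgroup G} (hC : C.IsConvex) {x : G} (hx1 : 1 < x) (hxC : x ∉ C)
    {c : G} (hc : c ∈ C) : c < x := by
  by_contra hle
  push_neg at hle
  exact hxC (hC 1 C.one_mem c hc x hx1.le hle)

lemma convex_chain (C D : Subgroup G) (hC : C.IsConvex) (hD : D.IsConvex) : C ≤ D ∨ D ≤ C := by
  by_contra hcon
  push_neg at hcon
  obtain ⟨h1, h2⟩ := hcon
  obtain ⟨x, hxC, hxD⟩ := SetLike.not_le_iff_exists.mp h1
  obtain ⟨y, hyD, hyC⟩ := SetLike.not_le_iff_exists.mp h2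
  set x' := max x x⁻¹ with hx'
  set y' := max y y⁻¹ with hy'
  have hx'C : x' ∈ C := by
    rcases max_choice x x⁻¹ with h | h <;> rw [hx', h]
    · exact hxC
    · exact C.inv_mem hxC
  have hx'D : x' ∉ D := by
    rcases max_choice x x⁻¹ with h | h <;> rw [hx', h]
    · exact hxD
    · intro hm; exact hxD (by simpa using D.inv_mem hm)
  have hy'D : y' ∈ D := by
    rcases max_choice y y⁻¹ with h | h <;> rw [hy', h]
    · exact hyD
    · exact D.inv_mem hyD
  have hy'C : y' ∉ C := by
    rcases max_choice y y⁻¹ with h | h <;> rw [hy', h]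
    · exact hyC
    · intro hm; exact hyC (by simpa using C.inv_mem hm)
  have hx'1 : 1 ≤ x' := by
    rcases le_total x 1 with h | h
    · calc (1:G) ≤ x⁻¹ := by simpa using mul_le_mul_left h x⁻¹
      _ ≤ x' := le_max_right _ _
    · exact h.trans (le_max_left _ _)
  have hy'1 : 1 ≤ y' := by
    rcases le_total y 1 with h | h
    · calc (1:G) ≤ y⁻¹ := by simpa using mul_le_mul_left h y⁻¹
      _ ≤ y' := le_max_right _ _
    · exact h.trans (le_max_left _ _)
  rcases le_total x' y' with h | h
  · exact hx'D (hD 1 D.one_mem y' hy'D x' hx'1 h)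
  · exact hy'C (hC 1 C.one_mem x' hx'C y' hy'1 h)

/-! ### Word machinery -/

/-- ascending product `u 0 * u 1 * ⋯ * u (j-1)` -/
def ascP (u : ℕ → G) : ℕ → G
  | 0 => 1
  | j + 1 => ascP u j * u j

/-- descending product `u (j-1) * ⋯ * u 0` -/
def dsc (u : ℕ → G) : ℕ → G
  | 0 => 1
  | j + 1 => u j * dsc u j

/-- segment product `u k * u (k+1) * ⋯ * u (k+m-1)` -/
def seg (u : ℕ → G) : ℕ → ℕ → G
  | _, 0 => 1
  | k, m + 1 => u k * seg u (k + 1) m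

def pP (u : ℕ → G) : List (Fin 2) → ℕ → G
  | [], _ => 1
  | x :: t, k => (if x = 0 then 1 else u k) * pP u t (k + 1)

def qP (u : ℕ → G) : List (Fin 2) → G
  | [] => 1
  | x :: t => (if x = 0 then 1 else u t.length) * qP u t

def uu (a u₀ : G) : ℕ → G := fun i => a ^ i * u₀ * (a ^ i)⁻¹

def uuB (a u₀ : G) : ℕ → G := fun i => (a ^ i)⁻¹ * u₀ * a ^ i

lemma uu_zero (a u₀ : G) : uu a u₀ 0 = u₀ := by simp [uu]

lemma uuB_zero (a u₀ : G) : uuB a u₀ 0 = u₀ := by simp [uuB]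

lemma uu_succ (a u₀ : G) (i : ℕ) : uu a u₀ (i + 1) = a * uu a u₀ i * a⁻¹ := by
  unfold uu; rw [pow_succ]; group

lemma uuB_succ (a u₀ : G) (i : ℕ) : uuB a u₀ (i + 1) = a⁻¹ * uuB a u₀ i * a := by
  unfold uuB; rw [pow_succ]; group

section WordA

variable (u : ℕ → G)

lemma one_le_pP (hu : ∀ i, 1 ≤ u i) : ∀ (w : List (Fin 2)) (k : ℕ), 1 ≤ pP u w k := by
  intro w
  induction w with
  | nil => intro k; simp [pP]
  | cons x t ih =>
    intro k
    show 1 ≤ (if x = 0 then 1 else u k) * pP u t (k + 1)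
    refine one_le_mul ?_ (ih (k + 1))
    split <;> simp [hu k]

lemma pP_mem (C : Subgroup G) (hu : ∀ i, u i ∈ C) :
    ∀ (w : List (Fin 2)) (k : ℕ), pP u w k ∈ C := by
  intro w
  induction w with
  | nil => intro k; exact C.one_mem
  | cons x t ih =>
    intro k
    refine C.mul_mem ?_ (ih (k + 1))
    split
    · exact C.one_mem
    · exact hu k

lemma pP_le_seg (hu : ∀ i, 1 ≤ u i) :
    ∀ (w : List (Fin 2)) (k : ℕ), pP u w k ≤ seg u k w.length := by
  intro w
  induction w with
  | nil => intro k; simp [pP, seg]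
  | cons x t ih =>
    intro k
    show (if x = 0 then 1 else u k) * pP u t (k + 1) ≤ u k * seg u (k + 1) t.length
    refine mul_le_mul' ?_ (ih (k + 1))
    split <;> simp [hu k]

lemma one_le_ascP (hu : ∀ i, 1 ≤ u i) : ∀ j, 1 ≤ ascP u j := by
  intro j
  induction j with
  | zero => simp [ascP]
  | succ j ih => exact one_le_mul ih (hu j)

lemma ascP_seg : ∀ (m k : ℕ), ascP u (k + m) = ascP u k * seg u k m := by
  intro m
  induction m with
  | zero => intro k; simp [seg]
  | succ m ih =>
    intro k
    have e : k + (m + 1) = (k + 1) + m := by omega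
    rw [e, ih (k + 1)]
    show ascP u (k + 1) * seg u (k + 1) m = ascP u k * seg u k (m + 1)
    show ascP u k * u k * seg u (k + 1) m = ascP u k * (u k * seg u (k + 1) m)
    rw [mul_assoc]

lemma seg_lt (hu : ∀ i, 1 ≤ u i) (hdom : ∀ j, ascP u j < u j) (k m : ℕ) :
    seg u k m < u (k + m) := by
  calc seg u k m ≤ ascP u k * seg u k m := le_mul_of_one_le_left' (one_le_ascP u hu k)
  _ = ascP u (k + m) := (ascP_seg u m k).symm
  _ < u (k + m) := hdom (k + m)

lemma pP_concat : ∀ (t : List (Fin 2)) (x : Fin 2) (k : ℕ),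
    pP u (t ++ [x]) k = pP u t k * (if x = 0 then 1 else u (k + t.length)) := by
  intro t
  induction t with
  | nil => intro x k; simp [pP]
  | cons y s ih =>
    intro x k
    show (if y = 0 then 1 else u k) * pP u (s ++ [x]) (k + 1) = _
    rw [ih x (k + 1)]
    show _ = (if y = 0 then 1 else u k) * pP u s (k + 1) * (if x = 0 then 1 else u (k + (s.length + 1)))
    have e : k + 1 + s.length = k + (s.length + 1) := by omega
    rw [e, mul_assoc]

lemma fin2_cases (x : Fin 2) : x = 0 ∨ x = 1 := by omega

lemma pP_inj (hu : ∀ i, 1 ≤ u i) (hdom : ∀ j, ascP u j < u j) :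
    ∀ (w₁ w₂ : List (Fin 2)) (k : ℕ), w₁.length = w₂.length →
      pP u w₁ k = pP u w₂ k → w₁ = w₂ := by
  intro w₁
  induction w₁ using List.reverseRecOn with
  | nil =>
    intro w₂ k hlen _
    cases w₂ with
    | nil => rfl
    | cons y t => simp at hlen
  | append_singleton t₁ x ih =>
    intro w₂ k hlen heq
    rcases List.eq_nil_or_concat w₂ with rfl | ⟨t₂, y, rfl⟩
    · simp at hlen
    rw [List.concat_eq_append] at hlen heq ⊢
    have hlen' : t₁.length = t₂.length := by
      simp only [List.length_append, List.length_cons, List.length_nil] at hlen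
      omega
    rw [pP_concat, pP_concat] at heq
    have hub : ∀ (s₁ s₂ : List (Fin 2)), s₁.length = s₂.length →
        pP u s₁ k = pP u s₂ k * u (k + s₂.length) → False := by
      intro s₁ s₂ hl he
      have h1 : u (k + s₁.length) ≤ pP u s₁ k := by
        rw [hl]
        calc u (k + s₂.length) ≤ pP u s₂ k * u (k + s₂.length) :=
              le_mul_of_one_le_left' (one_le_pP u hu s₂ k)
        _ = pP u s₁ k := he.symm
      have h2 : pP u s₁ k ≤ seg u k s₁.length := pP_le_seg u hu s₁ k
      have h3 : seg u k s₁.length < u (k + s₁.length) := seg_lt u hu hdom k s₁.length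
      exact absurd ((h1.trans h2).trans_lt h3) (lt_irrefl _)
    rcases fin2_cases x with hx | hx <;> rcases fin2_cases y with hy | hy <;> subst hx <;> subst hy
    · rw [if_pos rfl, if_pos rfl, mul_one, mul_one] at heq
      rw [ih t₂ k hlen' heq]
    · exfalso
      rw [if_pos rfl, if_neg one_ne_zero, mul_one] at heq
      exact hub t₁ t₂ hlen' heq
    · exfalso
      rw [if_neg one_ne_zero, if_pos rfl, mul_one] at heq
      exact hub t₂ t₁ hlen'.symm heq.symm
    · rw [if_neg one_ne_zero, if_neg one_ne_zero, hlen'] at heq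
      have := mul_right_cancel heq
      rw [ih t₂ k hlen' this]

end WordA

section WordB

variable (u : ℕ → G)

lemma one_le_qP (hu : ∀ i, 1 ≤ u i) : ∀ w : List (Fin 2), 1 ≤ qP u w := by
  intro w
  induction w with
  | nil => simp [qP]
  | cons x t ih =>
    show 1 ≤ (if x = 0 then 1 else u t.length) * qP u t
    refine one_le_mul ?_ ih
    split <;> simp [hu]

lemma qP_mem (C : Subgroup G) (hu : ∀ i, u i ∈ C) : ∀ w : List (Fin 2), qP u w ∈ C := by
  intro w
  induction w with
  | nil => exact C.one_mem
  | cons x t ih =>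
    refine C.mul_mem ?_ ih
    split
    · exact C.one_mem
    · exact hu _

lemma qP_le_dsc (hu : ∀ i, 1 ≤ u i) : ∀ w : List (Fin 2), qP u w ≤ dsc u w.length := by
  intro w
  induction w with
  | nil => simp [qP, dsc]
  | cons x t ih =>
    show (if x = 0 then 1 else u t.length) * qP u t ≤ u t.length * dsc u t.length
    refine mul_le_mul' ?_ ih
    split <;> simp [hu]

lemma qP_inj (hu : ∀ i, 1 ≤ u i) (hdom : ∀ j, dsc u j < u j) :
    ∀ (w₁ w₂ : List (Fin 2)), w₁.length = w₂.length → qP u w₁ = qP u w₂ → w₁ = w₂ := by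
  intro w₁
  induction w₁ with
  | nil =>
    intro w₂ hlen _
    cases w₂ with
    | nil => rfl
    | cons y t => simp at hlen
  | cons x t₁ ih =>
    intro w₂ hlen heq
    cases w₂ with
    | nil => simp at hlen
    | cons y t₂ =>
      have hlen' : t₁.length = t₂.length := by simpa using hlen
      have heq' : (if x = 0 then 1 else u t₁.length) * qP u t₁
          = (if y = 0 then 1 else u t₂.length) * qP u t₂ := heq
      have hub : ∀ (s₁ s₂ : List (Fin 2)), s₁.length = s₂.length →
          u s₁.length * qP u s₁ = qP u s₂ → False := by
        intro s₁ s₂ hl he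
        have h1 : u s₂.length ≤ qP u s₂ := by
          rw [← hl]
          calc u s₁.length ≤ u s₁.length * qP u s₁ := le_mul_of_one_le_right' (one_le_qP u hu s₁)
          _ = qP u s₂ := he
        have h2 : qP u s₂ ≤ dsc u s₂.length := qP_le_dsc u hu s₂
        have h3 : dsc u s₂.length < u s₂.length := hdom s₂.length
        exact absurd ((h1.trans h2).trans_lt h3) (lt_irrefl _)
      rcases fin2_cases x with hx | hx <;> rcases fin2_cases y with hy | hy <;> subst hx <;> subst hy
      · rw [if_pos rfl, if_pos rfl, one_mul, one_mul] at heq'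
        rw [ih t₂ hlen' heq']
      · exfalso
        rw [if_pos rfl, if_neg one_ne_zero, one_mul] at heq'
        exact hub t₂ t₁ hlen'.symm heq'.symm
      · exfalso
        rw [if_neg one_ne_zero, if_pos rfl, one_mul] at heq'
        exact hub t₁ t₂ hlen' heq'
      · rw [if_neg one_ne_zero, if_neg one_ne_zero, hlen'] at heq'
        have := mul_left_cancel heq'
        rw [ih t₂ hlen' this]

end WordB

/-! ### The two core free-monoid criteria -/

section CoreLemmas

lemma evalA (a u₀ : G) : ∀ (w : List (Fin 2)) (k : ℕ),
    a ^ k * (w.map (fun i : Fin 2 => if i = 0 then a else u₀ * a)).prod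
      = pP (uu a u₀) w k * a ^ (k + w.length) := by
  intro w
  induction w with
  | nil => intro k; simp [pP]
  | cons x t ih =>
    intro k
    rw [List.map_cons, List.prod_cons]
    rcases fin2_cases x with hx | hx <;> subst hx
    · rw [if_pos rfl]
      show a ^ k * (a * (t.map _).prod) = (if (0 : Fin 2) = 0 then 1 else _) * pP (uu a u₀) t (k+1) * _
      rw [if_pos rfl, one_mul]
      have e1 : a ^ k * (a * (t.map (fun i : Fin 2 => if i = 0 then a else u₀ * a)).prod)
          = a ^ (k+1) * (t.map (fun i : Fin 2 => if i = 0 then a else u₀ * a)).prod := by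
        rw [pow_succ, mul_assoc]
      rw [e1, ih (k+1)]
      congr 2
      simp only [List.length_cons]
      omega
    · rw [if_neg one_ne_zero]
      show a ^ k * ((u₀ * a) * (t.map _).prod)
          = (if (1 : Fin 2) = 0 then 1 else uu a u₀ k) * pP (uu a u₀) t (k+1) * _
      rw [if_neg one_ne_zero]
      have e1 : a ^ k * ((u₀ * a) * (t.map (fun i : Fin 2 => if i = 0 then a else u₀ * a)).prod)
          = uu a u₀ k * (a ^ (k+1) * (t.map (fun i : Fin 2 => if i = 0 then a else u₀ * a)).prod) := by
        have e2 : a ^ k * (u₀ * a) = uu a u₀ k * a ^ (k+1) := by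
          unfold uu; rw [pow_succ]; group
        rw [← mul_assoc, e2, mul_assoc]
      rw [e1, ih (k+1), ← mul_assoc]
      congr 2
      simp only [List.length_cons]
      omega

theorem lemmaA (a u₀ : G) (C : Subgroup G) (hC : C.IsConvex) (ha1 : 1 < a) (hu0 : 1 ≤ u₀)
    (haC : a ∉ C) (huC : ∀ i, uu a u₀ i ∈ C)
    (hdom : ∀ j, ascP (uu a u₀) j < uu a u₀ j) :
    GeneratesFreeMonoid2 a (u₀ * a) := by
  have hu1 : ∀ i, 1 ≤ uu a u₀ i := fun i => one_le_conj (a ^ i) hu0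
  intro w₁ w₂ hval
  have hl₁ := FreeMonoid.lift_apply (fun i : Fin 2 => if i = 0 then a else u₀ * a) w₁
  have hl₂ := FreeMonoid.lift_apply (fun i : Fin 2 => if i = 0 then a else u₀ * a) w₂
  set v₁ := FreeMonoid.toList w₁ with hv₁
  set v₂ := FreeMonoid.toList w₂ with hv₂
  have hprod : (v₁.map (fun i : Fin 2 => if i = 0 then a else u₀ * a)).prod
      = (v₂.map (fun i : Fin 2 => if i = 0 then a else u₀ * a)).prod := by
    rw [← hl₁, ← hl₂, hval]
  have he₁ := evalA a u₀ v₁ 0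
  have he₂ := evalA a u₀ v₂ 0
  simp only [pow_zero, one_mul, Nat.zero_add] at he₁ he₂
  have heq : pP (uu a u₀) v₁ 0 * a ^ v₁.length = pP (uu a u₀) v₂ 0 * a ^ v₂.length := by
    rw [← he₁, ← he₂, hprod]
  have hlenkey : ∀ (s₁ s₂ : List (Fin 2)), s₁.length ≤ s₂.length →
      pP (uu a u₀) s₁ 0 * a ^ s₁.length = pP (uu a u₀) s₂ 0 * a ^ s₂.length →
      s₁.length = s₂.length := by
    intro s₁ s₂ hle he
    by_contra hne
    set d := s₂.length - s₁.length with hd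
    have hd0 : d ≠ 0 := by omega
    have e : a ^ s₂.length = a ^ d * a ^ s₁.length := by rw [← pow_add]; congr 1; omega
    rw [e, ← mul_assoc] at he
    have he2 : pP (uu a u₀) s₁ 0 = pP (uu a u₀) s₂ 0 * a ^ d := mul_right_cancel he
    have hmem : a ^ d ∈ C := by
      have : a ^ d = (pP (uu a u₀) s₂ 0)⁻¹ * pP (uu a u₀) s₁ 0 := by rw [he2]; group
      rw [this]
      exact C.mul_mem (C.inv_mem (pP_mem _ C huC s₂ 0)) (pP_mem _ C huC s₁ 0)
    have hle2 : a ≤ a ^ d := my_le_self_pow ha1.le hd0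
    exact haC (hC 1 C.one_mem (a ^ d) hmem a ha1.le hle2)
  have hlen : v₁.length = v₂.length := by
    rcases le_total v₁.length v₂.length with h | h
    · exact hlenkey v₁ v₂ h heq
    · exact (hlenkey v₂ v₁ h heq.symm).symm
  rw [hlen] at heq
  have hpp : pP (uu a u₀) v₁ 0 = pP (uu a u₀) v₂ 0 := mul_right_cancel heq
  have : v₁ = v₂ := pP_inj (uu a u₀) hu1 hdom v₁ v₂ 0 hlen hpp
  exact FreeMonoid.toList.injective this

lemma evalB (a u₀ : G) : ∀ (w : List (Fin 2)),
    (w.map (fun i : Fin 2 => if i = 0 then a else a * u₀)).prod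
      = a ^ w.length * qP (uuB a u₀) w := by
  intro w
  induction w with
  | nil => simp [qP]
  | cons x t ih =>
    rw [List.map_cons, List.prod_cons, ih]
    rcases fin2_cases x with hx | hx <;> subst hx
    · rw [if_pos rfl]
      show a * (a ^ t.length * qP (uuB a u₀) t)
          = a ^ (t.length + 1) * ((if (0:Fin 2) = 0 then 1 else uuB a u₀ t.length) * qP (uuB a u₀) t)
      rw [if_pos rfl, one_mul, pow_succ', mul_assoc]
    · rw [if_neg one_ne_zero]
      show (a * u₀) * (a ^ t.length * qP (uuB a u₀) t)
          = a ^ (t.length + 1) * ((if (1:Fin 2) = 0 then 1 else uuB a u₀ t.length) * qP (uuB a u₀) t)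
      rw [if_neg one_ne_zero]
      have e : (a * u₀) * a ^ t.length = a ^ (t.length + 1) * uuB a u₀ t.length := by
        unfold uuB; rw [pow_succ]; group
      rw [← mul_assoc, e, mul_assoc]

theorem lemmaB (a u₀ : G) (C : Subgroup G) (hC : C.IsConvex) (ha1 : 1 < a) (hu0 : 1 ≤ u₀)
    (haC : a ∉ C) (huC : ∀ i, uuB a u₀ i ∈ C)
    (hdom : ∀ j, dsc (uuB a u₀) j < uuB a u₀ j) :
    GeneratesFreeMonoid2 a (a * u₀) := by
  have hu1 : ∀ i, 1 ≤ uuB a u₀ i := by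
    intro i
    have := one_le_conj (a ^ i)⁻¹ hu0
    simpa [uuB] using this
  intro w₁ w₂ hval
  have hl₁ := FreeMonoid.lift_apply (fun i : Fin 2 => if i = 0 then a else a * u₀) w₁
  have hl₂ := FreeMonoid.lift_apply (fun i : Fin 2 => if i = 0 then a else a * u₀) w₂
  set v₁ := FreeMonoid.toList w₁ with hv₁
  set v₂ := FreeMonoid.toList w₂ with hv₂
  have hprod : (v₁.map (fun i : Fin 2 => if i = 0 then a else a * u₀)).prod
      = (v₂.map (fun i : Fin 2 => if i = 0 then a else a * u₀)).prod := by
    rw [← hl₁, ← hl₂, hval]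
  rw [evalB a u₀ v₁, evalB a u₀ v₂] at hprod
  have hlenkey : ∀ (s₁ s₂ : List (Fin 2)), s₁.length ≤ s₂.length →
      a ^ s₁.length * qP (uuB a u₀) s₁ = a ^ s₂.length * qP (uuB a u₀) s₂ →
      s₁.length = s₂.length := by
    intro s₁ s₂ hle he
    by_contra hne
    set d := s₂.length - s₁.length with hd
    have hd0 : d ≠ 0 := by omega
    have e : a ^ s₂.length = a ^ s₁.length * a ^ d := by rw [← pow_add]; congr 1; omega
    rw [e, mul_assoc] at he
    have he2 : qP (uuB a u₀) s₁ = a ^ d * qP (uuB a u₀) s₂ := mul_left_cancel he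
    have hmem : a ^ d ∈ C := by
      have : a ^ d = qP (uuB a u₀) s₁ * (qP (uuB a u₀) s₂)⁻¹ := by rw [he2]; group
      rw [this]
      exact C.mul_mem (qP_mem _ C huC s₁) (C.inv_mem (qP_mem _ C huC s₂))
    have hle2 : a ≤ a ^ d := my_le_self_pow ha1.le hd0
    exact haC (hC 1 C.one_mem (a ^ d) hmem a ha1.le hle2)
  have hlen : v₁.length = v₂.length := by
    rcases le_total v₁.length v₂.length with h | h
    · exact hlenkey v₁ v₂ h hprod
    · exact (hlenkey v₂ v₁ h hprod.symm).symm
  rw [hlen] at hprod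
  have hqq : qP (uuB a u₀) v₁ = qP (uuB a u₀) v₂ := mul_left_cancel hprod
  have : v₁ = v₂ := qP_inj (uuB a u₀) hu1 hdom v₁ v₂ hlen hqq
  exact FreeMonoid.toList.injective this

end CoreLemmas

/-! ### Jump lemmas -/

section Jump

variable {N H : Subgroup G}

lemma jump_min (hj : N.IsConvexJump H) {K : Subgroup G} (hK : K.IsConvex) {x : G}
    (hxN : x ∉ N) (hxK : x ∈ K) : H ≤ K := by
  rcases convex_chain H K hj.2.1 hK with h | h
  · exact h
  · rcases convex_chain K N hK hj.1 with h2 | h2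
    · exact absurd (h2 hxK) hxN
    · have hne : N ≠ K := fun he => hxN (he ▸ hxK)
      have hNK : N < K := lt_of_le_of_ne h2 hne
      rcases eq_or_lt_of_le h with he | hlt
      · exact le_of_eq he.symm
      · exact absurd ⟨hNK, hlt⟩ (hj.2.2.2 K hK)

lemma jump_le_N (hj : N.IsConvexJump H) {K : Subgroup G} (hK : K.IsConvex) (hKH : K < H) :
    K ≤ N := by
  rcases convex_chain K N hK hj.1 with h | h
  · exact h
  · rcases eq_or_lt_of_le h with he | hlt
    · exact le_of_eq he.symm
    · exact absurd ⟨hlt, hKH⟩ (hj.2.2.2 K hK)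

lemma jump_between_conj (hj : N.IsConvexJump H) (g : G) {K : Subgroup G} (hK : K.IsConvex) :
    ¬(cj g N < K ∧ K < cj g H) := by
  rintro ⟨h1, h2⟩
  refine hj.2.2.2 (cj g⁻¹ K) (cj_convex hK) ⟨?_, ?_⟩
  · have := cj_lt_cj g⁻¹ h1
    rwa [cj_inv_cj] at this
  · have := cj_lt_cj g⁻¹ h2
    rwa [cj_inv_cj] at this

lemma fixH_of_memH {h : G} (hh : h ∈ H) : cj h H = H := cj_self hh

lemma fixN_of_memH (hj : N.IsConvexJump H) {h : G} (hh : h ∈ H) : cj h N = N := by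
  rcases convex_chain (cj h N) N (cj_convex hj.1) hj.1 with hle | hle
  · rcases eq_or_lt_of_le hle with he | hlt
    · exact he
    · exact absurd ⟨hlt, by rw [fixH_of_memH hh]; exact hj.2.2.1⟩
        (jump_between_conj hj h hj.1)
  · rcases eq_or_lt_of_le hle with he | hlt
    · exact he.symm
    · have h2 : cj h⁻¹ N < cj h⁻¹ (cj h N) := cj_lt_cj h⁻¹ hlt
      rw [cj_inv_cj] at h2
      exact absurd ⟨h2, by rw [fixH_of_memH (H.inv_mem hh)]; exact hj.2.2.1⟩
        (jump_between_conj hj h⁻¹ hj.1)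

lemma exists_pos_elt (hj : N.IsConvexJump H) : ∃ h : G, h ∈ H ∧ h ∉ N ∧ 1 < h := by
  obtain ⟨x, hxH, hxN⟩ := SetLike.exists_of_lt hj.2.2.1
  have hx1 : x ≠ 1 := fun he => hxN (he ▸ N.one_mem)
  rcases lt_trichotomy 1 x with h | h | h
  · exact ⟨x, hxH, hxN, h⟩
  · exact absurd h.symm hx1
  · refine ⟨x⁻¹, H.inv_mem hxH, ?_, one_lt_inv_of_lt' h⟩
    intro hm; exact hxN (by simpa using N.inv_mem hm)

lemma arch (hj : N.IsConvexJump H) {x : G} (hxN : x ∉ N) (hx1 : 1 < x)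
    {y : G} (hy : y ∈ H) : ∃ n : ℕ, y ≤ x ^ n := by
  set Cx : Subgroup G :=
    { carrier := {z | ∃ n : ℕ, z ≤ x ^ n ∧ z⁻¹ ≤ x ^ n}
      one_mem' := ⟨0, by simp⟩
      mul_mem' := by
        rintro z w ⟨n, hz1, hz2⟩ ⟨m, hw1, hw2⟩
        refine ⟨n + m, ?_, ?_⟩
        · rw [pow_add]; exact mul_le_mul' hz1 hw1
        · rw [show n + m = m + n by omega, pow_add, mul_inv_rev]
          exact mul_le_mul' hw2 hz2
      inv_mem' := by
        rintro z ⟨n, hz1, hz2⟩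
        exact ⟨n, hz2, by simpa using hz1⟩ } with hCx
  have hconv : Cx.IsConvex := by
    rintro p ⟨np, hp1, hp2⟩ q ⟨nq, hq1, hq2⟩ y hpy hyq
    refine ⟨max np nq, hyq.trans (hq1.trans (my_pow_le_pow_right hx1.le (le_max_right _ _))), ?_⟩
    have : y⁻¹ ≤ p⁻¹ := inv_le_inv_iff.mpr hpy
    exact this.trans (hp2.trans (my_pow_le_pow_right hx1.le (le_max_left _ _)))
  have hxCx : x ∈ Cx := ⟨1, by simp, by
    simp only [pow_one]
    exact (inv_le_one'.mpr hx1.le).trans hx1.le⟩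
  have hHC : H ≤ Cx := jump_min hj hconv hxN hxCx
  obtain ⟨n, h1, _⟩ := hHC hy
  exact ⟨n, h1⟩

/-! ### PosN and mod-N order -/

def PosN (N : Subgroup G) (x : G) : Prop := x ∉ N ∧ 1 < x

def leN (N : Subgroup G) (x y : G) : Prop := ∃ n ∈ N, x ≤ y * n

lemma leN_refl (N : Subgroup G) (x : G) : leN N x x := ⟨1, N.one_mem, by simp⟩

lemma leN_of_le {x y : G} (h : x ≤ y) : leN N x y := ⟨1, N.one_mem, by simpa using h⟩

lemma leN_trans {x y z : G} (h1 : leN N x y) (h2 : leN N y z) : leN N x z := by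
  obtain ⟨n, hn, h1⟩ := h1
  obtain ⟨m, hm, h2⟩ := h2
  exact ⟨m * n, N.mul_mem hm hn, h1.trans (by rw [← mul_assoc]; exact mul_le_mul_left h2 n)⟩

lemma posN_gt (hNc : N.IsConvex) {x : G} (hx : PosN N x) {n : G} (hn : n ∈ N) : n < x :=
  conv_lt hNc hx.2 hx.1 hn

lemma posN_ne_one {x : G} (hx : PosN N x) : x ≠ 1 := ne_of_gt hx.2

lemma posN_of_le (hNc : N.IsConvex) {x y : G} (hx : PosN N x) (hxy : x ≤ y) : PosN N y := by
  refine ⟨?_, hx.2.trans_le hxy⟩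
  intro hm
  exact absurd hxy (not_le_of_gt (posN_gt hNc hx hm))

lemma posN_mul (hNc : N.IsConvex) {x y : G} (hx : PosN N x) (hy : PosN N y) :
    PosN N (x * y) :=
  posN_of_le hNc hx (le_mul_of_one_le_right' hy.2.le)

lemma posN_mulN_right (hNc : N.IsConvex) {x n : G} (hx : PosN N x) (hn : n ∈ N) :
    PosN N (x * n) := by
  constructor
  · intro hm
    have : x = (x * n) * n⁻¹ := by group
    exact hx.1 (this ▸ N.mul_mem hm (N.inv_mem hn))
  · have h1 : n⁻¹ < x := posN_gt hNc hx (N.inv_mem hn)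
    have := mul_lt_mul_left h1 n
    simpa using this

lemma posN_mulN_left (hNc : N.IsConvex) {x n : G} (hx : PosN N x) (hn : n ∈ N) :
    PosN N (n * x) := by
  constructor
  · intro hm
    have : x = n⁻¹ * (n * x) := by group
    exact hx.1 (this ▸ N.mul_mem (N.inv_mem hn) hm)
  · have h1 : n⁻¹ < x := posN_gt hNc hx (N.inv_mem hn)
    have := mul_lt_mul_right h1 n
    simpa using this

lemma posN_inv_notMem {x : G} (hx : x ∉ N) : x⁻¹ ∉ N := by
  intro hm; exact hx (by simpa using N.inv_mem hm)

lemma pos_conj {g x : G} (hfix : cj g N = N) (hx : PosN N x) : PosN N (g * x * g⁻¹) := by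
  refine ⟨?_, one_lt_conj g hx.2⟩
  intro hm
  exact hx.1 ((mem_fix hfix x).mpr hm)

lemma floorN (hj : N.IsConvexJump H) {β : G} (hβH : β ∈ H) (hβ : PosN N β)
    {z : G} (hz : z ∈ H) :
    ∃ p : ℤ, leN N (β ^ p) z ∧ ¬ leN N (β ^ (p + 1)) z := by
  obtain ⟨n₀, hn₀⟩ := arch hj hβ.1 hβ.2 hz
  obtain ⟨n₁, hn₁⟩ := arch hj hβ.1 hβ.2 (H.inv_mem hz)
  have hbdd : ∃ b : ℤ, ∀ p : ℤ, leN N (β ^ p) z → p ≤ b := by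
    refine ⟨n₀, ?_⟩
    intro p hple
    by_contra hgt
    push_neg at hgt
    obtain ⟨n, hnN, hle⟩ := hple
    have h1 : β ^ ((n₀ : ℤ) + 1) ≤ β ^ p := my_zpow_le hβ.2.le (by omega)
    have h2 : z * n ≤ β ^ (n₀ : ℤ) * n := by
      refine mul_le_mul_left ?_ n
      rw [zpow_natCast]; exact hn₀
    have h3 : β ^ ((n₀ : ℤ) + 1) ≤ β ^ (n₀ : ℤ) * n := (h1.trans hle).trans h2
    rw [zpow_add_one] at h3
    have h4 : β ≤ n := cancel_left_le h3
    exact hβ.1 (hj.1 1 N.one_mem n hnN β hβ.2.le h4)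
  have hne : ∃ p : ℤ, leN N (β ^ p) z := by
    refine ⟨-(n₁ : ℤ), 1, N.one_mem, ?_⟩
    rw [mul_one, zpow_neg, zpow_natCast]
    calc (β ^ n₁)⁻¹ ≤ (z⁻¹)⁻¹ := inv_le_inv_iff.mpr hn₁
    _ = z := by simp
  obtain ⟨p, hp1, hp2⟩ := Int.exists_greatest_of_bdd hbdd hne
  exact ⟨p, hp1, fun hc => by have := hp2 (p + 1) hc; omega⟩

end Jump

/-! ### Commutativity mod N and the growth lemma -/

section CommN

variable {N H : Subgroup G}

lemma conj_mem_of_fix {g x : G} {C : Subgroup G} (hfix : cj g C = C) (hx : x ∈ C) :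
    g⁻¹ * x * g ∈ C := by
  rw [← hfix] at hx
  exact hx

lemma conj_mem_of_fix' {g x : G} {C : Subgroup G} (hfix : cj g C = C) (hx : x ∈ C) :
    g * x * g⁻¹ ∈ C := (mem_fix hfix x).mp hx

lemma approx_of_min (hj : N.IsConvexJump H) {β : G} (hβH : β ∈ H) (hβ : PosN N β)
    (hmin : ∀ z, z ∈ H → PosN N z → ¬ PosN N (β * z⁻¹)) :
    ∀ z ∈ H, ∃ p : ℤ, ∃ n ∈ N, z = β ^ p * n := by
  intro z hz
  obtain ⟨p, hp1, hp2⟩ := floorN hj hβH hβ hz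
  set w := (β ^ p)⁻¹ * z with hw
  have hwH : w ∈ H := H.mul_mem (H.inv_mem (H.zpow_mem hβH p)) hz
  by_cases hwN : w ∈ N
  · exact ⟨p, w, hwN, by rw [hw]; group⟩
  rcases lt_trichotomy 1 w with hw1 | hw1 | hw1
  · exfalso
    have hposw : PosN N w := ⟨hwN, hw1⟩
    have hnb := hmin w hwH hposw
    by_cases hbwN : β * w⁻¹ ∈ N
    · apply hp2
      refine ⟨β⁻¹ * (β * w⁻¹) * β, conj_mem_of_fix (fixN_of_memH hj hβH) hbwN, le_of_eq ?_⟩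
      rw [hw, zpow_add_one]
      group
    · have hlt1 : ¬ (1 < β * w⁻¹) := fun hl => hnb ⟨hbwN, hl⟩
      push_neg at hlt1
      have hβw : β ≤ w := by
        have := mul_le_mul_left hlt1 w
        simpa [mul_assoc] using this
      apply hp2
      refine ⟨1, N.one_mem, ?_⟩
      rw [mul_one, zpow_add_one]
      calc β ^ p * β ≤ β ^ p * w := mul_le_mul_right hβw _
      _ = z := by rw [hw]; group
  · exact absurd (hw1 ▸ N.one_mem) hwN
  · exfalso
    obtain ⟨n, hn, hle⟩ := hp1
    have h2' := mul_le_mul_right hle z⁻¹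
    have e : z⁻¹ * (z * n) = n := by group
    rw [e] at h2'
    have ew : w⁻¹ = z⁻¹ * β ^ p := by rw [hw]; group
    rw [← ew] at h2'
    have hposwi : PosN N w⁻¹ := ⟨posN_inv_notMem hwN, one_lt_inv_of_lt' hw1⟩
    exact absurd h2' (not_le_of_gt (posN_gt hj.1 hposwi hn))

lemma commN_of_min (hj : N.IsConvexJump H) {β : G} (hβH : β ∈ H) (hβ : PosN N β)
    (hmin : ∀ z, z ∈ H → PosN N z → ¬ PosN N (β * z⁻¹)) :
    ∀ x ∈ H, ∀ y ∈ H, x⁻¹ * y⁻¹ * x * y ∈ N := by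
  intro x hx y hy
  obtain ⟨p, nx, hnx, hxe⟩ := approx_of_min hj hβH hβ hmin x hx
  obtain ⟨q, ny, hny, hye⟩ := approx_of_min hj hβH hβ hmin y hy
  have hfix : ∀ t : ℤ, cj (β ^ t) N = N := fun t => fixN_of_memH hj (H.zpow_mem hβH t)
  have e : x⁻¹ * y⁻¹ * x * y
      = nx⁻¹ * ((β ^ p)⁻¹ * ny⁻¹ * β ^ p) * ((β ^ q)⁻¹ * nx * β ^ q) * ny := by
    rw [hxe, hye]; group
  rw [e]
  refine N.mul_mem (N.mul_mem (N.mul_mem (N.inv_mem hnx) ?_) ?_) hny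
  · exact conj_mem_of_fix (hfix p) (N.inv_mem hny)
  · exact conj_mem_of_fix (hfix q) hnx

theorem commN (hj : N.IsConvexJump H) : ∀ x ∈ H, ∀ y ∈ H, x⁻¹ * y⁻¹ * x * y ∈ N := by
  have haux : ∀ x ∈ H, ∀ y ∈ H, ¬ PosN N (x⁻¹ * y⁻¹ * x * y) := by
    intro x hx y hy hPos
    set c := x⁻¹ * y⁻¹ * x * y with hcdef
    have hcH : c ∈ H := by
      rw [hcdef]
      exact H.mul_mem (H.mul_mem (H.mul_mem (H.inv_mem hx) (H.inv_mem hy)) hx) hy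
    have F1 : ∀ β, β ∈ H → PosN N β → ∃ n ∈ N, c ≤ β * β * n := by
      intro β hβH hβ
      obtain ⟨p, hp1, hp2⟩ := floorN hj hβH hβ hx
      obtain ⟨q, hq1, hq2⟩ := floorN hj hβH hβ hy
      obtain ⟨nx, hnx, hxle⟩ := hp1
      obtain ⟨ny, hny, hyle⟩ := hq1
      have hxlt : x < β ^ (p+1) := by
        by_contra hcon; push_neg at hcon
        exact hp2 ⟨1, N.one_mem, by simpa using hcon⟩
      have hylt : y < β ^ (q+1) := by
        by_contra hcon; push_neg at hcon
        exact hq2 ⟨1, N.one_mem, by simpa using hcon⟩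
      have hup : x * y < β ^ (p+q+2) := by
        have h1 : x * y < β ^ (p+1) * y := mul_lt_mul_left hxlt y
        have h2 : β ^ (p+1) * y < β ^ (p+1) * β ^ (q+1) := mul_lt_mul_right hylt _
        have e : β ^ (p+1) * β ^ (q+1) = β ^ (p+q+2) := by rw [← zpow_add]; congr 1; omega
        exact (h1.trans h2).trans_le (le_of_eq e)
      have hlow : β ^ (p+q) ≤ (y * x) * ((x⁻¹ * ny * x) * nx) := by
        have h1 : β ^ q * β ^ p ≤ (y * ny) * (x * nx) := mul_le_mul' hyle hxle
        have e1 : β ^ q * β ^ p = β ^ (p+q) := by rw [← zpow_add]; congr 1; omega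
        have e2 : (y * ny) * (x * nx) = (y * x) * ((x⁻¹ * ny * x) * nx) := by group
        rw [e1, e2] at h1; exact h1
      set m' := (x⁻¹ * ny * x) * nx with hm'
      have hm'N : m' ∈ N := N.mul_mem (conj_mem_of_fix (fixN_of_memH hj hx) hny) hnx
      have hinv : (y * x)⁻¹ ≤ m' * (β ^ (p+q))⁻¹ := by
        have h2 : ((y * x) * m')⁻¹ ≤ (β ^ (p+q))⁻¹ := inv_le_inv_iff.mpr hlow
        have e : ((y * x) * m')⁻¹ = m'⁻¹ * (y * x)⁻¹ := by group
        rw [e] at h2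
        have h3 := mul_le_mul_right h2 m'
        have e3 : m' * (m'⁻¹ * (y * x)⁻¹) = (y * x)⁻¹ := by group
        rwa [e3] at h3
      have hc1 : c ≤ m' * (β ^ (p+q))⁻¹ * (x * y) := by
        have e : c = (y * x)⁻¹ * (x * y) := by rw [hcdef]; group
        rw [e]
        exact mul_le_mul_left hinv (x * y)
      have hc2 : m' * (β ^ (p+q))⁻¹ * (x * y) < m' * (β ^ (p+q))⁻¹ * β ^ (p+q+2) :=
        mul_lt_mul_right hup _
      have e4 : (β ^ (p+q))⁻¹ * β ^ (p+q+2) = β * β := by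
        rw [← zpow_neg, ← zpow_add]
        have e5 : -(p+q) + (p+q+2) = 2 := by omega
        rw [e5, show (2:ℤ) = ((2:ℕ):ℤ) by norm_num, zpow_natCast, pow_two]
      have e6 : m' * (β ^ (p+q))⁻¹ * β ^ (p+q+2) = β * β * ((β*β)⁻¹ * m' * (β*β)) := by
        rw [mul_assoc, e4]
        group
      refine ⟨(β*β)⁻¹ * m' * (β*β),
        conj_mem_of_fix (fixN_of_memH hj (H.mul_mem hβH hβH)) hm'N, ?_⟩
      calc c ≤ m' * (β ^ (p+q))⁻¹ * (x*y) := hc1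
      _ ≤ m' * (β ^ (p+q))⁻¹ * β ^ (p+q+2) := hc2.le
      _ = β * β * ((β*β)⁻¹ * m' * (β*β)) := e6
    by_cases hmin1 : ∃ β', β' ∈ H ∧ PosN N β' ∧ PosN N (c * β'⁻¹)
    · obtain ⟨β', hβ'H, hβ'p, hβ'i⟩ := hmin1
      by_cases hmin2 : ∃ β'', β'' ∈ H ∧ PosN N β'' ∧ PosN N (β' * β''⁻¹)
      · obtain ⟨β'', hβ''H, hβ''p, hβ''i⟩ := hmin2
        -- F2 for β'
        have hcb : c * β'⁻¹ ∈ H := H.mul_mem hcH (H.inv_mem hβ'H)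
        obtain ⟨n, hn, hF1⟩ := F1 (c * β'⁻¹) hcb hβ'i
        have h1 : 1 ≤ β'⁻¹ * c * β'⁻¹ * n := by
          have e : (c * β'⁻¹) * (c * β'⁻¹) * n = c * (β'⁻¹ * c * β'⁻¹ * n) := by group
          rw [e] at hF1
          have h1' : c * 1 ≤ c * (β'⁻¹ * c * β'⁻¹ * n) := by rw [mul_one]; exact hF1
          exact cancel_left_le h1' 
        have h2 : β' ≤ c * β'⁻¹ * n := by
          have := mul_le_mul_right h1 β'
          have e : β' * (β'⁻¹ * c * β'⁻¹ * n) = c * β'⁻¹ * n := by group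
          rw [mul_one, e] at this
          exact this
        have h3 : β' * n⁻¹ * β' ≤ c := by
          have h4 := mul_le_mul_left h2 n⁻¹
          have e : c * β'⁻¹ * n * n⁻¹ = c * β'⁻¹ := by group
          rw [e] at h4
          have h5 := mul_le_mul_left h4 β'
          have e2 : c * β'⁻¹ * β' = c := by group
          rwa [e2] at h5
        set n' := β'⁻¹ * n⁻¹ * β' with hn'def
        have hn'N : n' ∈ N := conj_mem_of_fix (fixN_of_memH hj hβ'H) (N.inv_mem hn)
        have hF2 : β' * β' * n' ≤ c := by
          have e : β' * n⁻¹ * β' = β' * β' * n' := by rw [hn'def]; group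
          rwa [e] at h3
        -- F3
        have hδ : PosN N (β''⁻¹ * β') := by
          have hp := pos_conj (fix_inv (fixN_of_memH hj hβ''H)) hβ''i
          have e : β''⁻¹ * (β' * β''⁻¹) * (β''⁻¹)⁻¹ = β''⁻¹ * β' := by group
          rwa [e] at hp
        have hq₀ : PosN N ((β''⁻¹ * (β''⁻¹ * β') * β'') * (β''⁻¹ * β')) := by
          refine posN_mul hj.1 ?_ hδ
          have hp := pos_conj (fix_inv (fixN_of_memH hj hβ''H)) hδ
          have e : β''⁻¹ * (β''⁻¹ * β') * (β''⁻¹)⁻¹ = β''⁻¹ * (β''⁻¹ * β') * β'' := by group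
          rwa [e] at hp
        set q₀ := (β''⁻¹ * (β''⁻¹ * β') * β'') * (β''⁻¹ * β') with hq₀def
        have hsq : β' * β' = β'' * β'' * q₀ := by rw [hq₀def]; group
        obtain ⟨n₂, hn₂, hF1'⟩ := F1 β'' hβ''H hβ''p
        -- chain: β''β'' (q₀ n') ≤ c ≤ β'' β'' n₂
        have hchain : β'' * β'' * (q₀ * n') ≤ β'' * β'' * n₂ := by
          have e : β'' * β'' * (q₀ * n') = β' * β' * n' := by rw [hsq]; group
          rw [e]
          exact hF2.trans hF1'
        have h6 : q₀ * n' ≤ n₂ := cancel_left_le hchain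
        have h7 : q₀ ≤ n₂ * n'⁻¹ := by
          have := mul_le_mul_left h6 n'⁻¹
          have e : q₀ * n' * n'⁻¹ = q₀ := by group
          rwa [e] at this
        exact absurd h7 (not_le_of_gt (posN_gt hj.1 hq₀ (N.mul_mem hn₂ (N.inv_mem hn'N))))
      · push_neg at hmin2
        exact hPos.1 (commN_of_min hj hβ'H hβ'p hmin2 x hx y hy)
    · push_neg at hmin1
      exact hPos.1 (commN_of_min hj hcH hPos hmin1 x hx y hy)
  intro x hx y hy
  by_contra hcN
  rcases lt_trichotomy 1 (x⁻¹ * y⁻¹ * x * y) with h | h | h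
  · exact haux x hx y hy ⟨hcN, h⟩
  · exact hcN (h ▸ N.one_mem)
  · have hinv : 1 < y⁻¹ * x⁻¹ * y * x := by
      have e : y⁻¹ * x⁻¹ * y * x = (x⁻¹ * y⁻¹ * x * y)⁻¹ := by group
      rw [e]; exact one_lt_inv_of_lt' h
    have hninv : y⁻¹ * x⁻¹ * y * x ∉ N := by
      intro hm
      apply hcN
      have e : x⁻¹ * y⁻¹ * x * y = (y⁻¹ * x⁻¹ * y * x)⁻¹ := by group
      rw [e]; exact N.inv_mem hm
    exact haux y hy x hx ⟨hninv, hinv⟩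

lemma mul_pow_modN (hj : N.IsConvexJump H) {x y : G} (hx : x ∈ H) (hy : y ∈ H) (r : ℕ) :
    ∃ n ∈ N, (x * y) ^ r = x ^ r * y ^ r * n := by
  induction r with
  | zero => exact ⟨1, N.one_mem, by simp⟩
  | succ r ih =>
    obtain ⟨n, hn, he⟩ := ih
    have hcomm : (y ^ r)⁻¹ * x⁻¹ * (y ^ r) * x ∈ N := commN hj (y ^ r) (H.pow_mem hy r) x hx
    have hn₁ : (x * y)⁻¹ * n * (x * y) ∈ N :=
      conj_mem_of_fix (fixN_of_memH hj (H.mul_mem hx hy)) hn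
    refine ⟨(y⁻¹ * ((y ^ r)⁻¹ * x⁻¹ * (y ^ r) * x) * y) * ((x * y)⁻¹ * n * (x * y)),
      N.mul_mem (conj_mem_of_fix (fixN_of_memH hj hy) hcomm) hn₁, ?_⟩
    have e : x ^ r * y ^ r * n * (x * y)
        = (x ^ r * x) * (y ^ r * y) *
          ((y⁻¹ * ((y ^ r)⁻¹ * x⁻¹ * (y ^ r) * x) * y) * ((x * y)⁻¹ * n * (x * y))) := by
      group
    rw [pow_succ, he, e, ← pow_succ, ← pow_succ]

lemma key2 (hj : N.IsConvexJump H) (δ : G) (hδN : cj δ N = N) (hδH : cj δ H = H)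
    {h : G} (hhH : h ∈ H) (hhN : h ∉ N) (h1 : 1 < h)
    (hexp : PosN N (h⁻¹ * (δ * h * δ⁻¹))) :
    ∃ K : ℕ, PosN N ((h ^ 3)⁻¹ * (δ ^ K * h * (δ ^ K)⁻¹)) := by
  set d := h⁻¹ * (δ * h * δ⁻¹) with hd
  have hdH : d ∈ H := by
    rw [hd]
    exact H.mul_mem (H.inv_mem hhH) ((mem_fix hδH h).mp hhH)
  obtain ⟨m₀, hm₀⟩ := arch hj hexp.1 hexp.2 hhH
  set m := max m₀ 1 with hm
  have hm1 : 1 ≤ m := le_max_right _ _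
  have hdm : h ≤ d ^ m := hm₀.trans (my_pow_le_pow_right hexp.2.le (le_max_left _ _))
  set ψ : ℕ → G := fun k => δ ^ k * h * (δ ^ k)⁻¹ with hψ
  have hψ0 : ψ 0 = h := by simp [hψ]
  have hψsucc : ∀ k, ψ (k + 1) = δ * ψ k * δ⁻¹ := by
    intro k
    simp only [hψ]
    rw [pow_succ']
    group
  have hmain : ∀ k, leN N (h ^ (m + k)) ((ψ k) ^ m) := by
    intro k
    induction k with
    | zero => rw [hψ0]; exact leN_of_le (le_of_eq (by rw [Nat.add_zero]))
    | succ k ih =>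
      obtain ⟨n, hn, hle⟩ := ih
      have hc1 : δ * h ^ (m + k) * δ⁻¹ ≤ δ * ((ψ k) ^ m * n) * δ⁻¹ := conj_le_conj δ hle
      have e1 : δ * h ^ (m + k) * δ⁻¹ = (δ * h * δ⁻¹) ^ (m + k) := (conj_pow' δ h (m + k)).symm
      have e2 : δ * ((ψ k) ^ m * n) * δ⁻¹ = (ψ (k + 1)) ^ m * (δ * n * δ⁻¹) := by
        simp only [hψ]
        rw [conj_pow' (δ ^ k) h m, conj_pow' (δ ^ (k+1)) h m, pow_succ']
        group
      rw [e1, e2] at hc1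
      have hδhd : δ * h * δ⁻¹ = h * d := by rw [hd]; group
      rw [hδhd] at hc1
      have hnn : δ * n * δ⁻¹ ∈ N := (mem_fix hδN n).mp hn
      obtain ⟨n₂, hn₂, he₂⟩ := mul_pow_modN hj hhH hdH (m + k)
      have hstep : h ^ (m + k + 1) ≤ (h * d) ^ (m + k) * n₂⁻¹ := by
        have h3 : h ^ (m + k + 1) ≤ h ^ (m + k) * d ^ (m + k) := by
          rw [pow_succ]
          exact mul_le_mul_right (hdm.trans (my_pow_le_pow_right hexp.2.le (by omega))) _
        have e4 : h ^ (m + k) * d ^ (m + k) = (h * d) ^ (m + k) * n₂⁻¹ := by rw [he₂]; group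
        rw [e4] at h3
        exact h3
      refine leN_trans ⟨n₂⁻¹, N.inv_mem hn₂, ?_⟩ ⟨δ * n * δ⁻¹, hnn, hc1⟩
      rw [show m + (k + 1) = m + k + 1 by omega]
      exact hstep
  set K := 3 * m + 1 with hK
  refine ⟨K, ?_⟩
  by_contra hcon
  have hup : leN N ((ψ K) ^ m) (h ^ (3 * m)) := by
    simp only [PosN, not_and_or, not_not, not_lt] at hcon
    rcases hcon with hmem | hlt
    · have heψ : ψ K = h ^ 3 * ((h ^ 3)⁻¹ * (δ ^ K * h * (δ ^ K)⁻¹)) := by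
        simp only [hψ]; group
      have hn₃H : (h ^ 3)⁻¹ * (δ ^ K * h * (δ ^ K)⁻¹) ∈ H := hj.2.2.1.le hmem
      obtain ⟨n₄, hn₄, he₄⟩ := mul_pow_modN hj (H.pow_mem hhH 3) hn₃H m
      refine ⟨((h ^ 3)⁻¹ * (δ ^ K * h * (δ ^ K)⁻¹)) ^ m * n₄,
        N.mul_mem (N.pow_mem hmem m) hn₄, le_of_eq ?_⟩
      calc (ψ K) ^ m = (h ^ 3 * ((h ^ 3)⁻¹ * (δ ^ K * h * (δ ^ K)⁻¹))) ^ m := by rw [heψ]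
      _ = (h ^ 3) ^ m * ((h ^ 3)⁻¹ * (δ ^ K * h * (δ ^ K)⁻¹)) ^ m * n₄ := he₄
      _ = h ^ (3 * m) * (((h ^ 3)⁻¹ * (δ ^ K * h * (δ ^ K)⁻¹)) ^ m * n₄) := by
          rw [mul_assoc, ← pow_mul]
    · have hle : ψ K ≤ h ^ 3 := by
        simp only [hψ]
        have h2 := mul_le_mul_right hlt (h ^ 3)
        have e : h ^ 3 * ((h ^ 3)⁻¹ * (δ ^ K * h * (δ ^ K)⁻¹)) = δ ^ K * h * (δ ^ K)⁻¹ := by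
          group
        rwa [e, mul_one] at h2
      refine leN_of_le ?_
      calc (ψ K) ^ m ≤ (h ^ 3) ^ m := my_pow_le_pow_left hle m
      _ = h ^ (3 * m) := by rw [← pow_mul]
  obtain ⟨n₆, hn₆, hle₆⟩ := leN_trans (hmain K) hup
  have e7 : h ^ (m + K) = h ^ (3 * m) * h ^ (m + 1) := by rw [← pow_add]; congr 1; omega
  rw [e7] at hle₆
  have hle₇ : h ^ (m + 1) ≤ n₆ := cancel_left_le hle₆
  have hle₈ : h ≤ n₆ := (my_le_self_pow h1.le (by omega)).trans hle₇
  exact hhN (hj.1 1 N.one_mem n₆ hn₆ h h1.le hle₈)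

end CommN

/-! ### Type 3: the jump is moved by conjugation -/

section Type3

variable {N H : Subgroup G}

theorem type3 (hj : N.IsConvexJump H) (δ : G) (hδ : H ≤ cj δ N) :
    ∃ a b : G, 1 < a ∧ 1 < b ∧ GeneratesFreeMonoid2 a b := by
  obtain ⟨h, hhH, hhN, h1⟩ := exists_pos_elt hj
  by_cases hcase : ∃ t : ℤ, 1 < h ^ t * δ
  · -- Case A : positive a = h^t * δ with H ≤ cj a N ; use lemmaA
    obtain ⟨t, ha1⟩ := hcase
    set a := h ^ t * δ with hadef
    clear_value a
    have hHa : H ≤ cj a N := by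
      rw [hadef, ← cj_cj]
      calc H = cj (h ^ t) H := (cj_self (H.zpow_mem hhH t)).symm
      _ ≤ cj (h ^ t) (cj δ N) := cj_mono hδ
    have key : ∀ i : ℕ, uu a h i ∈ cj (a ^ i) H ∧ uu a h i ∉ cj (a ^ i) N := by
      intro i
      have e : (a ^ i)⁻¹ * (uu a h i) * (a ^ i) = h := by unfold uu; group
      constructor
      · show (a ^ i)⁻¹ * (uu a h i) * (a ^ i) ∈ H
        rw [e]; exact hhH
      · show ¬ ((a ^ i)⁻¹ * (uu a h i) * (a ^ i) ∈ N)
        rw [e]; exact hhN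
    have hHN : ∀ i : ℕ, cj (a ^ i) H ≤ cj (a ^ (i+1)) N := by
      intro i
      have e : cj (a ^ (i+1)) N = cj (a ^ i) (cj a N) := by rw [cj_cj, ← pow_succ]
      rw [e]
      exact cj_mono hHa
    have hNHi : ∀ i : ℕ, cj (a ^ i) N ≤ cj (a ^ i) H := fun i => cj_mono hj.2.2.1.le
    have hmono : ∀ i j : ℕ, i ≤ j → cj (a ^ i) H ≤ cj (a ^ j) H := by
      intro i j hij
      induction j, hij using Nat.le_induction with
      | base => exact le_rfl
      | succ j hij ih => exact ih.trans ((hHN j).trans (hNHi (j+1)))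
    set C : Subgroup G :=
      { carrier := {x | ∃ i : ℕ, x ∈ cj (a ^ i) H}
        one_mem' := ⟨0, (cj (a ^ 0) H).one_mem⟩
        mul_mem' := by
          rintro x y ⟨i, hx⟩ ⟨j, hy⟩
          exact ⟨max i j, Subgroup.mul_mem _ (hmono i _ (le_max_left i j) hx)
            (hmono j _ (le_max_right i j) hy)⟩
        inv_mem' := by
          rintro x ⟨i, hx⟩
          exact ⟨i, Subgroup.inv_mem _ hx⟩ } with hC
    have hCconv : C.IsConvex := by
      rintro p ⟨i, hpi⟩ q ⟨j, hqj⟩ y hpy hyq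
      exact ⟨max i j, cj_convex hj.2.1 p (hmono i _ (le_max_left i j) hpi) q
        (hmono j _ (le_max_right i j) hqj) y hpy hyq⟩
    have haC : a ∉ C := by
      rintro ⟨m, ham⟩
      have he : cj (a ^ (m+1)) H = cj (a ^ m) H := by
        rw [pow_succ', ← cj_cj, cj_self ham]
      have h2 := key (m+1)
      exact h2.2 (hHN m (he ▸ h2.1))
    have huC : ∀ i, uu a h i ∈ C := fun i => ⟨i, (key i).1⟩
    have hu1lt : ∀ i, 1 < uu a h i := fun i => one_lt_conj (a ^ i) h1
    have hascmem : ∀ j : ℕ, ascP (uu a h) (j+1) ∈ cj (a ^ (j+1)) N := by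
      intro j
      induction j with
      | zero =>
        show ascP (uu a h) 0 * uu a h 0 ∈ cj (a ^ 1) N
        have e0 : ascP (uu a h) 0 * uu a h 0 = h := by
          show (1 : G) * uu a h 0 = h
          rw [one_mul, uu_zero]
        rw [e0]
        have e1 : cj (a ^ 1) N = cj a N := by rw [pow_one]
        rw [e1]
        exact hHa hhH
      | succ j ih =>
        show ascP (uu a h) (j+1) * uu a h (j+1) ∈ cj (a ^ (j+2)) N
        refine Subgroup.mul_mem _ ?_ ?_
        · exact hHN (j+1) (hNHi (j+1) ih)
        · exact hHN (j+1) (key (j+1)).1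
    have hdom : ∀ j, ascP (uu a h) j < uu a h j := by
      intro j
      cases j with
      | zero =>
        show (1 : G) < uu a h 0
        rw [uu_zero]; exact h1
      | succ j =>
        exact conv_lt (cj_convex hj.1) (hu1lt (j+1)) (key (j+1)).2 (hascmem j)
    exact ⟨a, h * a, ha1, lt_of_lt_of_le ha1 (le_mul_of_one_le_left' h1.le),
      lemmaA a h C hCconv ha1 h1.le haC huC hdom⟩
  · -- Case B : a = δ⁻¹ is huge positive ; use lemmaB
    push_neg at hcase
    have hδle : ∀ t : ℤ, h ^ t ≤ δ⁻¹ := by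
      intro t
      have h2 := mul_le_mul_left (hcase t) δ⁻¹
      simpa [mul_assoc] using h2
    set a := δ⁻¹ with hadef
    have ha1 : 1 < a := by
      have := hδle 1
      rw [zpow_one] at this
      exact lt_of_lt_of_le h1 this
    have key : ∀ i : ℕ, uuB a h i ∈ cj (δ ^ i) H ∧ uuB a h i ∉ cj (δ ^ i) N := by
      intro i
      have e : (δ ^ i)⁻¹ * (uuB a h i) * (δ ^ i) = h := by
        unfold uuB; rw [hadef]; group
      constructor
      · show (δ ^ i)⁻¹ * (uuB a h i) * (δ ^ i) ∈ H
        rw [e]; exact hhH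
      · show ¬ ((δ ^ i)⁻¹ * (uuB a h i) * (δ ^ i) ∈ N)
        rw [e]; exact hhN
    have hHN : ∀ i : ℕ, cj (δ ^ i) H ≤ cj (δ ^ (i+1)) N := by
      intro i
      have e : cj (δ ^ (i+1)) N = cj (δ ^ i) (cj δ N) := by rw [cj_cj, ← pow_succ]
      rw [e]
      exact cj_mono hδ
    have hNHi : ∀ i : ℕ, cj (δ ^ i) N ≤ cj (δ ^ i) H := fun i => cj_mono hj.2.2.1.le
    have hmono : ∀ i j : ℕ, i ≤ j → cj (δ ^ i) H ≤ cj (δ ^ j) H := by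
      intro i j hij
      induction j, hij using Nat.le_induction with
      | base => exact le_rfl
      | succ j hij ih => exact ih.trans ((hHN j).trans (hNHi (j+1)))
    set C : Subgroup G :=
      { carrier := {x | ∃ i : ℕ, x ∈ cj (δ ^ i) H}
        one_mem' := ⟨0, (cj (δ ^ 0) H).one_mem⟩
        mul_mem' := by
          rintro x y ⟨i, hx⟩ ⟨j, hy⟩
          exact ⟨max i j, Subgroup.mul_mem _ (hmono i _ (le_max_left i j) hx)
            (hmono j _ (le_max_right i j) hy)⟩
        inv_mem' := by
          rintro x ⟨i, hx⟩
          exact ⟨i, Subgroup.inv_mem _ hx⟩ } with hC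
    have hCconv : C.IsConvex := by
      rintro p ⟨i, hpi⟩ q ⟨j, hqj⟩ y hpy hyq
      exact ⟨max i j, cj_convex hj.2.1 p (hmono i _ (le_max_left i j) hpi) q
        (hmono j _ (le_max_right i j) hqj) y hpy hyq⟩
    have haC : a ∉ C := by
      rintro ⟨m, ham⟩
      have hδm : δ ∈ cj (δ ^ m) H := by
        have h3 : a⁻¹ ∈ cj (δ ^ m) H := Subgroup.inv_mem _ ham
        rw [hadef, inv_inv] at h3
        exact h3
      have he : cj (δ ^ (m+1)) H = cj (δ ^ m) H := by
        rw [pow_succ', ← cj_cj, cj_self hδm]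
      have h2 := key (m+1)
      exact h2.2 (hHN m (he ▸ h2.1))
    have huC : ∀ i, uuB a h i ∈ C := fun i => ⟨i, (key i).1⟩
    have hu1lt : ∀ i, 1 < uuB a h i := by
      intro i
      have := one_lt_conj (a ^ i)⁻¹ h1
      simpa [uuB] using this
    have hdscmem : ∀ j : ℕ, dsc (uuB a h) (j+1) ∈ cj (δ ^ (j+1)) N := by
      intro j
      induction j with
      | zero =>
        show uuB a h 0 * dsc (uuB a h) 0 ∈ cj (δ ^ 1) N
        have e0 : uuB a h 0 * dsc (uuB a h) 0 = h := by
          show uuB a h 0 * (1 : G) = h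
          rw [mul_one, uuB_zero]
        rw [e0]
        have e1 : cj (δ ^ 1) N = cj δ N := by rw [pow_one]
        rw [e1]
        exact hδ hhH
      | succ j ih =>
        show uuB a h (j+1) * dsc (uuB a h) (j+1) ∈ cj (δ ^ (j+2)) N
        refine Subgroup.mul_mem _ ?_ ?_
        · exact hHN (j+1) (key (j+1)).1
        · exact hHN (j+1) (hNHi (j+1) ih)
    have hdom : ∀ j, dsc (uuB a h) j < uuB a h j := by
      intro j
      cases j with
      | zero =>
        show (1 : G) < uuB a h 0
        rw [uuB_zero]; exact h1
      | succ j =>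
        exact conv_lt (cj_convex hj.1) (hu1lt (j+1)) (key (j+1)).2 (hdscmem j)
    exact ⟨a, a * h, ha1, lt_of_lt_of_le ha1 (le_mul_of_one_le_right' h1.le),
      lemmaB a h C hCconv ha1 h1.le haC huC hdom⟩

end Type3

lemma conj_pow'' (g x : G) (n : ℕ) : (g⁻¹ * x * g) ^ n = g⁻¹ * x ^ n * g := by
  induction n with
  | zero => simp
  | succ n ih => rw [pow_succ, ih, pow_succ]; group

/-! ### Type 2: the jump is fixed but not centralized -/

section Type2

variable {N H : Subgroup G}

lemma get_exp (hj : N.IsConvexJump H) (γ : G) (hγN : cj γ N = N) (hγH : cj γ H = H)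
    {h₀ : G} (hh₀H : h₀ ∈ H) (hh₀N : h₀ ∉ N) (hc : h₀ * γ * h₀⁻¹ * γ⁻¹ ∉ N) :
    ∃ h δ : G, h ∈ H ∧ h ∉ N ∧ 1 < h ∧ cj δ N = N ∧ cj δ H = H ∧
      PosN N (h⁻¹ * (δ * h * δ⁻¹)) := by
  have hγN' : cj γ⁻¹ N = N := fix_inv hγN
  have hγH' : cj γ⁻¹ H = H := fix_inv hγH
  rcases lt_trichotomy 1 h₀ with h1 | h1 | h1
  · -- h₀ > 1
    have hz₁N : h₀⁻¹ * (γ * h₀ * γ⁻¹) ∉ N := by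
      intro hmem
      have h2 : h₀ * (h₀⁻¹ * (γ * h₀ * γ⁻¹)) * h₀⁻¹ ∈ N :=
        conj_mem_of_fix' (fixN_of_memH hj hh₀H) hmem
      have e : h₀ * (h₀⁻¹ * (γ * h₀ * γ⁻¹)) * h₀⁻¹ = (h₀ * γ * h₀⁻¹ * γ⁻¹)⁻¹ := by group
      rw [e] at h2
      exact hc (by simpa using N.inv_mem h2)
    by_cases hz₁pos : 1 < h₀⁻¹ * (γ * h₀ * γ⁻¹)
    · exact ⟨h₀, γ, hh₀H, hh₀N, h1, hγN, hγH, hz₁N, hz₁pos⟩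
    · have hne : h₀⁻¹ * (γ * h₀ * γ⁻¹) ≠ 1 := fun he => hz₁N (he ▸ N.one_mem)
      push_neg at hz₁pos
      have hlt : h₀⁻¹ * (γ * h₀ * γ⁻¹) < 1 := lt_of_le_of_ne hz₁pos hne
      have hposinv : PosN N (h₀⁻¹ * (γ * h₀ * γ⁻¹))⁻¹ :=
        ⟨posN_inv_notMem hz₁N, one_lt_inv_of_lt' hlt⟩
      have hp := pos_conj hγN' hposinv
      have e : γ⁻¹ * (h₀⁻¹ * (γ * h₀ * γ⁻¹))⁻¹ * (γ⁻¹)⁻¹ = h₀⁻¹ * (γ⁻¹ * h₀ * (γ⁻¹)⁻¹) := by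
        group
      rw [e] at hp
      exact ⟨h₀, γ⁻¹, hh₀H, hh₀N, h1, hγN', hγH', hp⟩
  · exfalso
    apply hc
    rw [← h1]
    simpa using N.one_mem
  · -- h₀ < 1, take h = h₀⁻¹
    have h1' : 1 < h₀⁻¹ := one_lt_inv_of_lt' h1
    have hmemH : h₀⁻¹ ∈ H := H.inv_mem hh₀H
    have hmemN : h₀⁻¹ ∉ N := posN_inv_notMem hh₀N
    have he0 : (h₀⁻¹)⁻¹ * (γ * h₀⁻¹ * γ⁻¹) = h₀ * γ * h₀⁻¹ * γ⁻¹ := by group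
    by_cases hpos : 1 < (h₀⁻¹)⁻¹ * (γ * h₀⁻¹ * γ⁻¹)
    · refine ⟨h₀⁻¹, γ, hmemH, hmemN, h1', hγN, hγH, ?_, hpos⟩
      rw [he0]; exact hc
    · have hne : (h₀⁻¹)⁻¹ * (γ * h₀⁻¹ * γ⁻¹) ≠ 1 := by
        rw [he0]; exact fun he => hc (he ▸ N.one_mem)
      push_neg at hpos
      have hlt : (h₀⁻¹)⁻¹ * (γ * h₀⁻¹ * γ⁻¹) < 1 := lt_of_le_of_ne hpos hne
      have hposinv : PosN N ((h₀⁻¹)⁻¹ * (γ * h₀⁻¹ * γ⁻¹))⁻¹ := by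
        refine ⟨?_, one_lt_inv_of_lt' hlt⟩
        rw [he0]
        exact posN_inv_notMem hc
      have hp := pos_conj hγN' hposinv
      have e : γ⁻¹ * ((h₀⁻¹)⁻¹ * (γ * h₀⁻¹ * γ⁻¹))⁻¹ * (γ⁻¹)⁻¹
          = (h₀⁻¹)⁻¹ * (γ⁻¹ * h₀⁻¹ * (γ⁻¹)⁻¹) := by group
      rw [e] at hp
      exact ⟨h₀⁻¹, γ⁻¹, hmemH, hmemN, h1', hγN', hγH', hp⟩

theorem type2 (hj : N.IsConvexJump H) (γ : G) (hγN : cj γ N = N) (hγH : cj γ H = H)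
    {h₀ : G} (hh₀H : h₀ ∈ H) (hc : h₀ * γ * h₀⁻¹ * γ⁻¹ ∉ N) :
    ∃ a b : G, 1 < a ∧ 1 < b ∧ GeneratesFreeMonoid2 a b := by
  have hh₀N : h₀ ∉ N := by
    intro hmem
    apply hc
    have h2 : γ * h₀⁻¹ * γ⁻¹ ∈ N := conj_mem_of_fix' hγN (N.inv_mem hmem)
    have e : h₀ * γ * h₀⁻¹ * γ⁻¹ = h₀ * (γ * h₀⁻¹ * γ⁻¹) := by group
    rw [e]
    exact N.mul_mem hmem h2
  obtain ⟨h, δ, hhH, hhN, h1, hδN, hδH, hexp⟩ := get_exp hj γ hγN hγH hh₀H hh₀N hc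
  obtain ⟨K, hK⟩ := key2 hj δ hδN hδH hhH hhN h1 hexp
  have hDN : cj (δ ^ K) N = N := cj_pow_fix hδN K
  have hDH : cj (δ ^ K) H = H := cj_pow_fix hδH K
  have hcommN := commN hj
  by_cases hcase : ∃ t : ℤ, 1 < h ^ t * δ ^ K
  · -- Case A
    obtain ⟨t, ha1'⟩ := hcase
    obtain ⟨a, hadef⟩ : ∃ a : G, a = h ^ t * δ ^ K := ⟨_, rfl⟩
    have ha1 : 1 < a := by rw [hadef]; exact ha1'
    have hfaN : cj a N = N := by
      rw [hadef, ← cj_cj, hDN]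
      exact fixN_of_memH hj (H.zpow_mem hhH t)
    have hfaH : cj a H = H := by
      rw [hadef, ← cj_cj, hDH]
      exact fixH_of_memH (H.zpow_mem hhH t)
    have hexpA : PosN N ((h ^ 3)⁻¹ * (a * h * a⁻¹)) := by
      have e : (h ^ 3)⁻¹ * (a * h * a⁻¹)
          = h ^ t * ((h ^ 3)⁻¹ * (δ ^ K * h * (δ ^ K)⁻¹)) * (h ^ t)⁻¹ := by
        rw [hadef]; group
      rw [e]
      exact pos_conj (fixN_of_memH hj (H.zpow_mem hhH t)) hK
    -- a ∉ H
    have haH : a ∉ H := by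
      intro hamem
      have hn₇ : h⁻¹ * a * h * a⁻¹ ∈ N := by
        have h2 := hcommN h hhH a⁻¹ (H.inv_mem hamem)
        have e : h⁻¹ * (a⁻¹)⁻¹ * h * a⁻¹ = h⁻¹ * a * h * a⁻¹ := by group
        rwa [e] at h2
      have hlt1 : 1 < (h ^ 3)⁻¹ * (a * h * a⁻¹) := hexpA.2
      have e : a * h * a⁻¹ = h * (h⁻¹ * a * h * a⁻¹) := by group
      rw [e] at hlt1
      have h2 : h ^ 3 < h * (h⁻¹ * a * h * a⁻¹) := lt_of_one_lt_inv_mul hlt1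
      have h3 : h ^ 2 < h⁻¹ * a * h * a⁻¹ := by
        have e2 : h ^ 3 = h * h ^ 2 := by rw [pow_succ']
        rw [e2] at h2
        exact cancel_left_lt h2
      have h4 : h ≤ h ^ 2 := my_le_self_pow h1.le (by omega)
      have h5 : h⁻¹ * a * h * a⁻¹ < h := posN_gt hj.1 ⟨hhN, h1⟩ hn₇
      exact absurd ((h4.trans_lt h3).trans h5) (lt_irrefl _)
    -- cubic growth
    have hcube : ∀ i : ℕ, PosN N ((uu a h i ^ 3)⁻¹ * uu a h (i + 1)) := by
      intro i
      have e : (uu a h i ^ 3)⁻¹ * uu a h (i + 1)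
          = a ^ i * ((h ^ 3)⁻¹ * (a * h * a⁻¹)) * (a ^ i)⁻¹ := by
        unfold uu
        rw [conj_pow' (a ^ i) h 3, pow_succ]
        group
      rw [e]
      exact pos_conj (cj_pow_fix hfaN i) hexpA
    have hu1 : ∀ i, 1 ≤ uu a h i := fun i => one_le_conj (a ^ i) h1.le
    have hsq : ∀ i, uu a h i ^ 2 < uu a h (i + 1) := by
      intro i
      have h2 : uu a h i ^ 3 < uu a h (i + 1) := lt_of_one_lt_inv_mul (hcube i).2
      exact lt_of_le_of_lt (my_pow_le_pow_right (hu1 i) (by omega)) h2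
    have hdom : ∀ j, ascP (uu a h) j < uu a h j := by
      intro j
      induction j with
      | zero =>
        show (1 : G) < uu a h 0
        rw [uu_zero]; exact h1
      | succ j ih =>
        show ascP (uu a h) j * uu a h j < uu a h (j + 1)
        calc ascP (uu a h) j * uu a h j ≤ uu a h j * uu a h j :=
              mul_le_mul_left ih.le _
        _ = uu a h j ^ 2 := (pow_two _).symm
        _ < uu a h (j + 1) := hsq j
    have huC : ∀ i, uu a h i ∈ H := by
      intro i
      exact conj_mem_of_fix' (cj_pow_fix hfaH i) hhH
    exact ⟨a, h * a, ha1, lt_of_lt_of_le ha1 (le_mul_of_one_le_left' h1.le),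
      lemmaA a h H hj.2.1 ha1 h1.le haH huC hdom⟩
  · -- Case B
    push_neg at hcase
    obtain ⟨a, hadef⟩ : ∃ a : G, a = (δ ^ K)⁻¹ := ⟨_, rfl⟩
    have hδle : ∀ t : ℤ, h ^ t ≤ a := by
      intro t
      have h2 := mul_le_mul_left (hcase t) (δ ^ K)⁻¹
      rw [← hadef] at h2
      simpa [mul_assoc, hadef] using h2
    have ha1 : 1 < a := by
      have := hδle 1
      rw [zpow_one] at this
      exact lt_of_lt_of_le h1 this
    have haNfix : cj a N = N := by rw [hadef]; exact fix_inv hDN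
    have haHfix : cj a H = H := by rw [hadef]; exact fix_inv hDH
    have haH : a ∉ H := by
      intro hamem
      obtain ⟨n, hn⟩ := arch hj hhN h1 hamem
      have h2 := hδle ((n : ℤ) + 1)
      have h3 : h ^ ((n : ℤ) + 1) ≤ h ^ (n : ℤ) := by
        calc h ^ ((n : ℤ) + 1) ≤ a := h2
        _ ≤ h ^ n := hn
        _ = h ^ (n : ℤ) := by rw [zpow_natCast]
      rw [zpow_add_one] at h3
      have h4 : h ≤ 1 := by
        have := mul_le_mul_right h3 (h ^ (n : ℤ))⁻¹
        simpa [mul_assoc] using this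
      exact absurd h1 (not_lt_of_ge h4)
    have hexpB : PosN N ((h ^ 3)⁻¹ * (a⁻¹ * h * a)) := by
      have e2 : (h ^ 3)⁻¹ * (a⁻¹ * h * a) = (h ^ 3)⁻¹ * (δ ^ K * h * (δ ^ K)⁻¹) := by
        rw [hadef]; group
      rw [e2]
      exact hK
    have hcube : ∀ i : ℕ, PosN N ((uuB a h i ^ 3)⁻¹ * uuB a h (i + 1)) := by
      intro i
      have e : (uuB a h i ^ 3)⁻¹ * uuB a h (i + 1)
          = (a ^ i)⁻¹ * ((h ^ 3)⁻¹ * (a⁻¹ * h * a)) * ((a ^ i)⁻¹)⁻¹ := by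
        unfold uuB
        rw [conj_pow'' (a ^ i) h 3, pow_succ]
        group
      rw [e]
      exact pos_conj (fix_inv (cj_pow_fix haNfix i)) hexpB
    have hu1 : ∀ i, 1 ≤ uuB a h i := by
      intro i
      have := one_le_conj (a ^ i)⁻¹ h1.le
      simpa [uuB] using this
    have hsq : ∀ i, uuB a h i ^ 2 < uuB a h (i + 1) := by
      intro i
      have h2 : uuB a h i ^ 3 < uuB a h (i + 1) := lt_of_one_lt_inv_mul (hcube i).2
      exact lt_of_le_of_lt (my_pow_le_pow_right (hu1 i) (by omega)) h2
    have hdom : ∀ j, dsc (uuB a h) j < uuB a h j := by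
      intro j
      induction j with
      | zero =>
        show (1 : G) < uuB a h 0
        rw [uuB_zero]; exact h1
      | succ j ih =>
        show uuB a h j * dsc (uuB a h) j < uuB a h (j + 1)
        calc uuB a h j * dsc (uuB a h) j ≤ uuB a h j * uuB a h j :=
              mul_le_mul_right ih.le _
        _ = uuB a h j ^ 2 := (pow_two _).symm
        _ < uuB a h (j + 1) := hsq j
    have huC : ∀ i, uuB a h i ∈ H := by
      intro i
      exact conj_mem_of_fix (cj_pow_fix haHfix i) hhH
    exact ⟨a, a * h, ha1, lt_of_lt_of_le ha1 (le_mul_of_one_le_right' h1.le),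
      lemmaB a h H hj.2.1 ha1 h1.le haH huC hdom⟩

end Type2

end FMproof

open FMproof in
/-- Let `(G,<)` be an ordered group possessing a convex jump `(N, H)`
which is not central, i.e. `[H,G] ⊄ N`. Then `G` contains a noncommutative free monoid:
there exist `a, b ∈ G` with `1 < a` and `1 < b` generating a free monoid of rank 2. -/
theorem free_monoid_of_noncentral_convex_jump (G : Type*) [Group G] [LinearOrder G]
    [CovariantClass G G (· * ·) (· < ·)]
    [CovariantClass G G (Function.swap (· * ·)) (· < ·)]
    (N H : Subgroup G) (hjump : N.IsConvexJump H)
    (hnc : ¬ ⁅H, (⊤ : Subgroup G)⁆ ≤ N) :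
    ∃ a b : G, 1 < a ∧ 1 < b ∧ GeneratesFreeMonoid2 a b := by
  rw [Subgroup.commutator_le] at hnc
  push_neg at hnc
  obtain ⟨h₀, hh₀H, g₀, -, hc₀⟩ := hnc
  rw [commutatorElement_def] at hc₀
  by_cases hH : cj g₀ H = H
  · by_cases hN : cj g₀ N = N
    · exact type2 hjump g₀ hN hH hh₀H hc₀
    · exfalso
      rcases convex_chain (cj g₀ N) N (cj_convex hjump.1) hjump.1 with hle | hle
      · have hlt : cj g₀ N < N := lt_of_le_of_ne hle hN
        exact jump_between_conj hjump g₀ hjump.1 ⟨hlt, by rw [hH]; exact hjump.2.2.1⟩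
      · have hlt : N < cj g₀ N := lt_of_le_of_ne hle (fun he => hN he.symm)
        have h2 : cj g₀⁻¹ N < N := by
          have := cj_lt_cj g₀⁻¹ hlt
          rwa [cj_inv_cj] at this
        have hH' : cj g₀⁻¹ H = H := fix_inv hH
        exact jump_between_conj hjump g₀⁻¹ hjump.1 ⟨h2, by rw [hH']; exact hjump.2.2.1⟩
  · rcases convex_chain (cj g₀ H) H (cj_convex hjump.2.1) hjump.2.1 with hle | hle
    · have hlt : cj g₀ H < H := lt_of_le_of_ne hle hH
      have hKN : cj g₀ H ≤ N := jump_le_N hjump (cj_convex hjump.2.1) hlt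
      have hδ : H ≤ cj g₀⁻¹ N := by
        have := cj_mono (g := g₀⁻¹) hKN
        rwa [cj_inv_cj] at this
      exact type3 hjump g₀⁻¹ hδ
    · have hlt : H < cj g₀ H := lt_of_le_of_ne hle (fun he => hH he.symm)
      have h2 : cj g₀⁻¹ H < H := by
        have := cj_lt_cj g₀⁻¹ hlt
        rwa [cj_inv_cj] at this
      have hKN : cj g₀⁻¹ H ≤ N := jump_le_N hjump (cj_convex hjump.2.1) h2
      have hδ : H ≤ cj g₀ N := by
        have := cj_mono (g := g₀) hKN
        rwa [cj_cj, mul_inv_cancel, cj_one] at this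
      exact type3 hjump g₀ hδ
end

section
/- Let (G,<) be an ordered group and let C be a convex subgroup of (G,<) which is not normal in G. Then there exists an element b ∈ G such that bCb⁻¹ ⊊ C, i.e., the conjugate subgroup bCb⁻¹ is properly contained in C. -/
section Aux

variable {G : Type*} [Group G] [LinearOrder G]
    [CovariantClass G G (· * ·) (· < ·)]
    [CovariantClass G G (Function.swap (· * ·)) (· < ·)]

lemma aux_mem_of_one_le {C D : Subgroup G} (hC : C.IsConvex) (hD : D.IsConvex)
    {x : G} (hx : x ∈ C) (hxD : x ∉ D) {y : G} (hy : y ∈ D) (h1 : 1 ≤ y) : y ∈ C := by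
  haveI := mulLeftMono_of_mulLeftStrictMono G
  haveI := mulRightMono_of_mulRightStrictMono G
  rcases le_total y x with h | h
  · exact hC 1 C.one_mem x hx y h1 h
  rcases le_total y x⁻¹ with h' | h'
  · exact hC 1 C.one_mem x⁻¹ (C.inv_mem hx) y h1 h'
  · -- x ≤ y and x⁻¹ ≤ y, so y⁻¹ ≤ x ≤ y, contradiction with x ∉ D
    exact absurd (hD y⁻¹ (D.inv_mem hy) y hy x (by
      have := mul_le_mul_left (mul_le_mul_right h' y⁻¹) x
      simpa [mul_assoc] using this) h) hxD

lemma aux_subset {C D : Subgroup G} (hC : C.IsConvex) (hD : D.IsConvex)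
    {x : G} (hx : x ∈ C) (hxD : x ∉ D) : (D : Set G) ⊆ (C : Set G) := by
  intro y hy
  rcases le_total 1 y with h1 | h1
  · exact aux_mem_of_one_le hC hD hx hxD hy h1
  · have : y⁻¹ ∈ C :=
      aux_mem_of_one_le hC hD hx hxD (D.inv_mem hy) (by
      haveI := mulLeftMono_of_mulLeftStrictMono G
      haveI := mulRightMono_of_mulRightStrictMono G
      have := mul_le_mul_left (mul_le_mul_right h1 y⁻¹) 1
      simpa using this)
    simpa using C.inv_mem this

lemma aux_conv_map (C : Subgroup G) (hC : C.IsConvex) (b : G) :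
    (C.map (MulAut.conj b).toMonoidHom).IsConvex := by
  haveI := mulLeftMono_of_mulLeftStrictMono G
  haveI := mulRightMono_of_mulRightStrictMono G
  intro x hx z hz y hxy hyz
  simp only [Subgroup.mem_map, MulEquiv.coe_toMonoidHom, MulAut.conj_apply] at hx hz ⊢
  obtain ⟨a, ha, rfl⟩ := hx
  obtain ⟨c, hc, rfl⟩ := hz
  refine ⟨b⁻¹ * y * b, ?_, by group⟩
  have h1 : a ≤ b⁻¹ * y * b := by
    have := mul_le_mul_left (mul_le_mul_right hxy b⁻¹) b
    simpa [mul_assoc] using this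
  have h2 : b⁻¹ * y * b ≤ c := by
    have := mul_le_mul_left (mul_le_mul_right hyz b⁻¹) b
    simpa [mul_assoc] using this
  exact hC a ha c hc _ h1 h2

end Aux

/-- Let `(G,<)` be an ordered group and let `C` be a convex subgroup of
`(G,<)` which is not normal in `G`. Then there exists `b ∈ G` such that `bCb⁻¹ ⊊ C`. -/
theorem exists_conjugate_properly_contained (G : Type*) [Group G] [LinearOrder G]
    [CovariantClass G G (· * ·) (· < ·)]
    [CovariantClass G G (Function.swap (· * ·)) (· < ·)]
    (C : Subgroup G) (hC : C.IsConvex) (hCnn : ¬ C.Normal) :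
    ∃ b : G, ((fun c => b * c * b⁻¹) '' (C : Set G)) ⊂ (C : Set G) := by
  -- extract a witness of non-normality
  obtain ⟨n, hn, g, hg⟩ : ∃ n ∈ C, ∃ g : G, g * n * g⁻¹ ∉ C := by
    by_contra h
    push_neg at h
    exact hCnn ⟨h⟩
  set D : Subgroup G := C.map (MulAut.conj g).toMonoidHom with hDdef
  have hDconv : D.IsConvex := aux_conv_map C hC g
  have hmem : g * n * g⁻¹ ∈ D := ⟨n, hn, rfl⟩
  have hsub : (C : Set G) ⊆ (D : Set G) := aux_subset hDconv hC hmem hg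
  have hDset : (D : Set G) = (fun c => g * c * g⁻¹) '' (C : Set G) := by
    ext y; simp [hDdef, Subgroup.mem_map, eq_comm, mul_assoc]
  refine ⟨g⁻¹, ?_⟩
  constructor
  · -- g⁻¹ C g ⊆ C
    rintro y ⟨c, hc, rfl⟩
    have hcD : (c : G) ∈ (D : Set G) := hsub hc
    rw [hDset] at hcD
    obtain ⟨a, ha, hae⟩ := hcD
    have heq : g⁻¹ * c * g⁻¹⁻¹ = a := by rw [← hae]; group
    show g⁻¹ * c * g⁻¹⁻¹ ∈ (C : Set G)
    rw [heq]; exact ha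
  · -- not C ⊆ g⁻¹ C g
    intro hcon
    apply hg
    have hnC : (n : G) ∈ (C : Set G) := hn
    obtain ⟨a, ha, hae⟩ := hcon hnC
    have heq : g * n * g⁻¹ = a := by rw [← hae]; group
    rw [heq]; exact ha
end
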